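/- (Norm multiplicativity) Define ‖Q‖ = √(|q_r|² + |q_d|²) for Q = q_r + q_d ε. If Q₁ and Q₂ both satisfy the orthogonality condition q_r q_d† + q_d q_r† = 0, then ‖Q₁ Q₂‖ = ‖Q₁‖ ‖Q₂‖. -/

import Mathlib

noncomputable section

/-- The algebra `K = ℍ ⊕ ℍε` of "dual" quaternions with `ε` central, `ε² = 1`,
modeled on pairs `(q_r, q_d)`. -/
def Kmul (x y : Quaternion ℝ × Quaternion ℝ) : Quaternion ℝ × Quaternion ℝ :=
  (x.1 * y.1 + x.2 * y.2, x.1 * y.2 + x.2 * y.1)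

/-- Conjugation on `K`: quaternion conjugation on both components (`ε† = ε`). -/
def Kconj (x : Quaternion ℝ × Quaternion ℝ) : Quaternion ℝ × Quaternion ℝ :=
  (star x.1, star x.2)

/-- The norm of an element of K: the Euclidean norm of (q_r, q_d) ∈ ℝ⁸. -/
def Knorm (x : Quaternion ℝ × Quaternion ℝ) : ℝ :=
  Real.sqrt (Quaternion.normSq x.1 + Quaternion.normSq x.2)


lemma Knorm_key (a b c d : Quaternion ℝ) (h : c * star d + d * star c = 0) :
    Quaternion.normSq (a*c+b*d) + Quaternion.normSq (a*d+b*c)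
    = (Quaternion.normSq a + Quaternion.normSq b) * (Quaternion.normSq c + Quaternion.normSq d) := by
  have hre : (c * star d).re = 0 := by
    have := congrArg QuaternionAlgebra.re h
    simp [Quaternion.re_mul, Quaternion.re_star, Quaternion.imI_star, Quaternion.imJ_star, Quaternion.imK_star, Quaternion.re_zero] at this
    simp [Quaternion.re_mul, Quaternion.re_star, Quaternion.imI_star, Quaternion.imJ_star, Quaternion.imK_star]; linarith [this]
  simp only [Quaternion.normSq_def', Quaternion.re_add, Quaternion.imI_add, Quaternion.imJ_add,
    Quaternion.imK_add, Quaternion.re_mul, Quaternion.imI_mul, Quaternion.imJ_mul, Quaternion.imK_mul]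
  have hre' : c.re * d.re + c.imI * d.imI + c.imJ * d.imJ + c.imK * d.imK = 0 := by
    simpa [Quaternion.re_mul, Quaternion.re_star, Quaternion.imI_star, Quaternion.imJ_star, Quaternion.imK_star] using hre
  linear_combination (4 * (a.re*b.re + a.imI*b.imI + a.imJ*b.imJ + a.imK*b.imK)) * hre'

/-- Norm multiplicativity: if Q₁ and Q₂ satisfy the orthogonality condition, then
‖Q₁Q₂‖ = ‖Q₁‖‖Q₂‖. -/
theorem K_norm_mul (Q1 Q2 : Quaternion ℝ × Quaternion ℝ)
    (h1 : Q1.1 * star Q1.2 + Q1.2 * star Q1.1 = 0)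
    (h2 : Q2.1 * star Q2.2 + Q2.2 * star Q2.1 = 0) :
    Knorm (Kmul Q1 Q2) = Knorm Q1 * Knorm Q2 := by
  unfold Knorm Kmul
  rw [Knorm_key Q1.1 Q1.2 Q2.1 Q2.2 h2,
    Real.sqrt_mul (by have := Quaternion.normSq_nonneg (a := Q1.1); have := Quaternion.normSq_nonneg (a := Q1.2); linarith)]
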